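/- Assume r₂ > d. Then the point (0, K₂(1 − d/r₂)) is an equilibrium of the host–parasite ecological model, and the Jacobian matrix (the 2×2 matrix of partial derivatives of the right-hand side) at this point has eigenvalues r₁ + a·d·K₂/r₂ − a·K₂ and d − r₂. Consequently, if r₁/a < K₂(1 − d/r₂) then both eigenvalues are negative, while if r₁/a > K₂(1 − d/r₂) then the Jacobian has one positive and one negative eigenvalue (a saddle). -/

import Mathlib

open Polynomial

/-- Right-hand side of the host–parasite ecological model. -/
noncomputable def ecoRHS (r₁ r₂ K₁ K₂ a h e d : ℝ) (p : ℝ × ℝ) : ℝ × ℝ :=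
  (p.1 * (r₁ * (1 - p.1 / K₁) - a * p.2 / (1 + h * a * p.1)),
   p.2 * (e * a * p.1 / (1 + h * a * p.1) - d + r₂ * (1 - p.2 / K₂)))

/-- The Jacobian matrix (matrix of partial derivatives) of a planar vector field. -/
noncomputable def ecoJac (F : ℝ × ℝ → ℝ × ℝ) (p : ℝ × ℝ) : Matrix (Fin 2) (Fin 2) ℝ :=
  !![fderiv ℝ (fun q => (F q).1) p (1, 0), fderiv ℝ (fun q => (F q).1) p (0, 1);
     fderiv ℝ (fun q => (F q).2) p (1, 0), fderiv ℝ (fun q => (F q).2) p (0, 1)]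

lemma dirX' (f : ℝ × ℝ → ℝ) (x y A : ℝ) (hf : DifferentiableAt ℝ f (x, y))
    (h1 : HasDerivAt (fun t => f (t, y)) A x) : fderiv ℝ f (x, y) (1, 0) = A := by
  have hι : HasDerivAt (fun t : ℝ => ((t, y) : ℝ × ℝ)) ((1 : ℝ), (0 : ℝ)) x :=
    (hasDerivAt_id x).prodMk (hasDerivAt_const x y)
  have h2 : HasDerivAt (fun t => f (t, y)) (fderiv ℝ f (x, y) (1, 0)) x :=
    hf.hasFDerivAt.comp_hasDerivAt x hι
  exact h2.unique h1

lemma dirY' (f : ℝ × ℝ → ℝ) (x y A : ℝ) (hf : DifferentiableAt ℝ f (x, y))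
    (h1 : HasDerivAt (fun t => f (x, t)) A y) : fderiv ℝ f (x, y) (0, 1) = A := by
  have hι : HasDerivAt (fun t : ℝ => ((x, t) : ℝ × ℝ)) ((0 : ℝ), (1 : ℝ)) y :=
    (hasDerivAt_const y x).prodMk (hasDerivAt_id y)
  have h2 : HasDerivAt (fun t => f (x, t)) (fderiv ℝ f (x, y) (0, 1)) y :=
    hf.hasFDerivAt.comp_hasDerivAt y hι
  exact h2.unique h1

lemma ecoJac_parasiteOnly (r₁ r₂ K₁ K₂ a h e d : ℝ)
    (hr₂ : 0 < r₂) (hK₁ : 0 < K₁) (hK₂ : 0 < K₂) :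
    ecoJac (ecoRHS r₁ r₂ K₁ K₂ a h e d) (0, K₂ * (1 - d / r₂))
      = !![r₁ - a * (K₂ * (1 - d / r₂)), 0;
           K₂ * (1 - d / r₂) * (e * a), d - r₂] := by
  set y : ℝ := K₂ * (1 - d / r₂) with hy
  have hK₁0 : K₁ ≠ 0 := hK₁.ne'
  have hK₂0 : K₂ ≠ 0 := hK₂.ne'
  have hden0 : (1 : ℝ) + h * a * 0 ≠ 0 := by norm_num
  have hdiff1 : DifferentiableAt ℝ
      (fun q : ℝ × ℝ => q.1 * (r₁ * (1 - q.1 / K₁) - a * q.2 / (1 + h * a * q.1))) (0, y) := by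
    simp only [div_eq_mul_inv]
    fun_prop (disch := norm_num)
  have hdiff2 : DifferentiableAt ℝ
      (fun q : ℝ × ℝ => q.2 * (e * a * q.1 / (1 + h * a * q.1) - d + r₂ * (1 - q.2 / K₂))) (0, y) := by
    simp only [div_eq_mul_inv]
    fun_prop (disch := norm_num)
  have hden : HasDerivAt (fun t : ℝ => 1 + h * a * t) (h * a) 0 := by
    simpa using (((hasDerivAt_id (0:ℝ)).const_mul (h*a)).const_add 1)
  have H11 : HasDerivAt (fun t : ℝ => t * (r₁ * (1 - t / K₁) - a * y / (1 + h * a * t)))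
      (r₁ - a * y) 0 := by
    have h2 : HasDerivAt (fun t : ℝ => a * y / (1 + h * a * t))
        ((0 * (1 + h * a * 0) - a * y * (h * a)) / (1 + h * a * 0) ^ 2) 0 :=
      (hasDerivAt_const (0:ℝ) (a*y)).div hden hden0
    have h3 := ((((hasDerivAt_id (0:ℝ)).div_const K₁).const_sub 1).const_mul r₁).sub h2
    have h4 := (hasDerivAt_id (0:ℝ)).mul h3
    refine h4.congr_deriv ?_
    norm_num
  have H12 : HasDerivAt (fun t : ℝ => (0:ℝ) * (r₁ * (1 - 0 / K₁) - a * t / (1 + h * a * 0)))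
      0 y := by
    have : (fun t : ℝ => (0:ℝ) * (r₁ * (1 - 0 / K₁) - a * t / (1 + h * a * 0))) = fun _ => 0 := by
      funext t; ring
    rw [this]; exact hasDerivAt_const _ _
  have H21 : HasDerivAt (fun t : ℝ => y * (e * a * t / (1 + h * a * t) - d + r₂ * (1 - y / K₂)))
      (y * (e * a)) 0 := by
    have h2 : HasDerivAt (fun t : ℝ => e * a * t / (1 + h * a * t))
        ((e * a * (1 + h * a * 0) - e * a * 0 * (h * a)) / (1 + h * a * 0) ^ 2) 0 := by
      have hnum : HasDerivAt (fun t : ℝ => e * a * t) (e * a) 0 := by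
        simpa using (hasDerivAt_id (0:ℝ)).const_mul (e*a)
      exact hnum.div hden hden0
    have h3 := ((h2.sub_const d).add_const (r₂ * (1 - y / K₂))).const_mul y
    refine h3.congr_deriv ?_
    norm_num
  have H22 : HasDerivAt (fun t : ℝ => t * (e * a * 0 / (1 + h * a * 0) - d + r₂ * (1 - t / K₂)))
      (d - r₂) y := by
    have h3 : HasDerivAt (fun t : ℝ => e * a * 0 / (1 + h * a * 0) - d + r₂ * (1 - t / K₂))
        (r₂ * (-(1 / K₂) * 1)) y := by
      have := ((((hasDerivAt_id y).div_const K₂).const_sub 1).const_mul r₂).const_add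
        (e * a * 0 / (1 + h * a * 0) - d)
      refine this.congr_deriv ?_
      ring
    have h4 := (hasDerivAt_id y).mul h3
    refine h4.congr_deriv ?_
    have hy2 : e * a * 0 / (1 + h * a * 0) - d + r₂ * (1 - y / K₂) = 0 := by
      rw [hy]; field_simp; ring
    rw [hy2]
    rw [hy]; simp only [id]; field_simp; ring
  unfold ecoJac
  simp only [ecoRHS]
  rw [dirX' _ 0 y _ hdiff1 H11, dirY' _ 0 y _ hdiff1 H12,
      dirX' _ 0 y _ hdiff2 H21, dirY' _ 0 y _ hdiff2 H22]

/-- when r₂ > d, the parasite-only point (0, K₂(1 − d/r₂)) is an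
equilibrium, and the Jacobian there has eigenvalues r₁ + adK₂/r₂ − aK₂ and d − r₂;
sign consequences for the two stability regimes. -/
theorem parasiteOnly_equilibrium_jacobian
    (r₁ r₂ K₁ K₂ a h e d : ℝ)
    (hr₁ : 0 < r₁) (hr₂ : 0 < r₂) (hK₁ : 0 < K₁) (hK₂ : 0 < K₂)
    (ha : 0 < a) (hh : 0 < h) (he : 0 < e) (hd : 0 ≤ d)
    (hrd : r₂ > d) :
    ecoRHS r₁ r₂ K₁ K₂ a h e d (0, K₂ * (1 - d / r₂)) = (0, 0) ∧
    (ecoJac (ecoRHS r₁ r₂ K₁ K₂ a h e d) (0, K₂ * (1 - d / r₂))).charpoly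
      = (X - C (r₁ + a * d * K₂ / r₂ - a * K₂)) * (X - C (d - r₂)) ∧
    (r₁ / a < K₂ * (1 - d / r₂) →
      (r₁ + a * d * K₂ / r₂ - a * K₂ < 0 ∧ d - r₂ < 0)) ∧
    (r₁ / a > K₂ * (1 - d / r₂) →
      (0 < r₁ + a * d * K₂ / r₂ - a * K₂ ∧ d - r₂ < 0)) := by
  have hr₂0 : r₂ ≠ 0 := hr₂.ne'
  have hK₂0 : K₂ ≠ 0 := hK₂.ne'
  have hEig : r₁ - a * (K₂ * (1 - d / r₂)) = r₁ + a * d * K₂ / r₂ - a * K₂ := by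
    field_simp; ring
  refine ⟨?_, ?_, ?_, ?_⟩
  · simp only [ecoRHS, Prod.mk.injEq]
    constructor
    · ring
    · have : e * a * 0 / (1 + h * a * 0) - d + r₂ * (1 - K₂ * (1 - d / r₂) / K₂) = 0 := by
        field_simp; ring
      rw [this, mul_zero]
  · rw [ecoJac_parasiteOnly r₁ r₂ K₁ K₂ a h e d hr₂ hK₁ hK₂, ← hEig,
      Matrix.charpoly, Matrix.det_fin_two]
    simp [Matrix.charmatrix_apply]
  · intro hlt
    refine ⟨?_, by linarith⟩
    rw [← hEig]
    have := (div_lt_iff₀ ha).mp hlt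
    nlinarith
  · intro hgt
    refine ⟨?_, by linarith⟩
    rw [← hEig]
    have := (lt_div_iff₀ ha).mp hgt
    nlinarith
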